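/- Through each point of the conic C there pass exactly: one line of L₁, q lines of L₃, one line of L₁', q(q−1) lines of L₄', and no line of L₂, L₄, L₂' or L₃'. -/

import Mathlib

/-!
Common setting: `PG(3,q)` as the lattice of subspaces of `V = GF(q)⁴`;
the pencil of quadrics `Q_λ : x₁x₃ - x₂² + λx₄² = 0`, the plane `π : x₄ = 0`,
the conic `C = Q_λ ∩ π`, and the group `G ≤ PGL(4,q)` induced by the matrices
`M(a,b,c,d)`.
-/

/-- The quadratic form `F_λ(x) = x₁x₃ - x₂² + λx₄²` on `V = F⁴`. -/
def Fq (F : Type) [Field F] (lam : F) (v : Fin 4 → F) : F :=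
  v 0 * v 2 - v 1 ^ 2 + lam * v 3 ^ 2

/-- The matrix `M(a,b,c,d)`. -/
def Mmat (F : Type) [Field F] (a b c d : F) : Matrix (Fin 4) (Fin 4) F :=
  !![a^2, 2*a*c, c^2, 0;
     a*b, a*d + b*c, c*d, 0;
     b^2, 2*b*d, d^2, 0;
     0,   0,       0,   a*d - b*c]

/-- A point of `PG(3,q)`: a 1-dimensional subspace of `F⁴`. -/
def isPoint (F : Type) [Field F] (P : Submodule F (Fin 4 → F)) : Prop :=
  Module.finrank F P = 1

/-- A line of `PG(3,q)`: a 2-dimensional subspace of `F⁴`. -/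
def isLine (F : Type) [Field F] (l : Submodule F (Fin 4 → F)) : Prop :=
  Module.finrank F l = 2

/-- A plane of `PG(3,q)`: a 3-dimensional subspace of `F⁴`. -/
def isPlane (F : Type) [Field F] (s : Submodule F (Fin 4 → F)) : Prop :=
  Module.finrank F s = 3

/-- The quadric `Q_λ`, as the set of points on which `F_λ` vanishes. -/
def quadric (F : Type) [Field F] (lam : F) : Set (Submodule F (Fin 4 → F)) :=
  {P | isPoint F P ∧ ∀ v ∈ P, Fq F lam v = 0}

/-- The plane `π : x₄ = 0`. -/
def planePi (F : Type) [Field F] : Submodule F (Fin 4 → F) where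
  carrier := {v | v 3 = 0}
  add_mem' := by
    intro a b ha hb
    simp only [Set.mem_setOf_eq, Pi.add_apply] at *
    rw [ha, hb, add_zero]
  zero_mem' := by simp
  smul_mem' := by
    intro c a ha
    simp only [Set.mem_setOf_eq, Pi.smul_apply, smul_eq_mul] at *
    rw [ha, mul_zero]

/-- The point `U₄ = ⟨(0,0,0,1)⟩`. -/
def pointU4 (F : Type) [Field F] : Submodule F (Fin 4 → F) :=
  Submodule.span F {(Pi.single 3 1 : Fin 4 → F)}

/-- The conic `C = Q_λ ∩ π` (independent of `λ`). -/
def conicC (F : Type) [Field F] : Set (Submodule F (Fin 4 → F)) :=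
  {P | P ∈ quadric F 0 ∧ P ≤ planePi F}

/-- The set of points of the quadric `Q_λ` lying on a subspace `l`. -/
def qpts (F : Type) [Field F] (lam : F) (l : Submodule F (Fin 4 → F)) :
    Set (Submodule F (Fin 4 → F)) :=
  {P | P ∈ quadric F lam ∧ P ≤ l}

/-- A line is tangent to `Q_λ` if it contains exactly one of its points. -/
def tangentTo (F : Type) [Field F] (l : Submodule F (Fin 4 → F)) (lam : F) : Prop :=
  (qpts F lam l).ncard = 1

/-- A line is secant to `Q_λ` if it contains exactly two of its points. -/
def secantTo (F : Type) [Field F] (l : Submodule F (Fin 4 → F)) (lam : F) : Prop :=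
  (qpts F lam l).ncard = 2

/-- A line is external to `Q_λ` if it contains none of its points. -/
def externalTo (F : Type) [Field F] (l : Submodule F (Fin 4 → F)) (lam : F) : Prop :=
  (qpts F lam l).ncard = 0

/-- `L₁`: lines of `π` tangent to `C`. -/
def lineL1 (F : Type) [Field F] : Set (Submodule F (Fin 4 → F)) :=
  {l | isLine F l ∧ l ≤ planePi F ∧ ({P | P ∈ conicC F ∧ P ≤ l}).ncard = 1}

/-- `L₂`: lines of `π` external to `C`. -/
def lineL2 (F : Type) [Field F] : Set (Submodule F (Fin 4 → F)) :=
  {l | isLine F l ∧ l ≤ planePi F ∧ ({P | P ∈ conicC F ∧ P ≤ l}).ncard = 0}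

/-- `L₃`: lines of `π` secant to `C`. -/
def lineL3 (F : Type) [Field F] : Set (Submodule F (Fin 4 → F)) :=
  {l | isLine F l ∧ l ≤ planePi F ∧ ({P | P ∈ conicC F ∧ P ≤ l}).ncard = 2}

/-- `E`: the external points of `C` in `π` (on exactly two tangent lines of `C`). -/
def setE (F : Type) [Field F] : Set (Submodule F (Fin 4 → F)) :=
  {P | isPoint F P ∧ P ≤ planePi F ∧ P ∉ conicC F ∧
    ({m | m ∈ lineL1 F ∧ P ≤ m}).ncard = 2}

/-- `I`: the internal points of `C` in `π` (on no tangent line of `C`). -/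
def setI (F : Type) [Field F] : Set (Submodule F (Fin 4 → F)) :=
  {P | isPoint F P ∧ P ≤ planePi F ∧ P ∉ conicC F ∧
    ({m | m ∈ lineL1 F ∧ P ≤ m}).ncard = 0}

/-- `L₁'`: the lines through `U₄` contained in the cone `Q₀`. -/
def lineL1' (F : Type) [Field F] : Set (Submodule F (Fin 4 → F)) :=
  {l | isLine F l ∧ pointU4 F ≤ l ∧ ∀ v ∈ l, Fq F 0 v = 0}

/-- `L₂'`: the lines through `U₄` meeting `π` in a point of `I`. -/
def lineL2' (F : Type) [Field F] : Set (Submodule F (Fin 4 → F)) :=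
  {l | isLine F l ∧ pointU4 F ≤ l ∧ (l ⊓ planePi F) ∈ setI F}

/-- `L₃'`: the lines through `U₄` meeting `π` in a point of `E`. -/
def lineL3' (F : Type) [Field F] : Set (Submodule F (Fin 4 → F)) :=
  {l | isLine F l ∧ pointU4 F ≤ l ∧ (l ⊓ planePi F) ∈ setE F}

/-- `L₄`: the lines not through `U₄`, tangent to the cone `Q₀`, meeting `π` in a
point of `E`. -/
def lineL4 (F : Type) [Field F] : Set (Submodule F (Fin 4 → F)) :=
  {l | isLine F l ∧ ¬ pointU4 F ≤ l ∧ tangentTo F l 0 ∧ (l ⊓ planePi F) ∈ setE F}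

/-- `L₄'`: the lines meeting `π` in exactly one point, lying on `C`, and secant to
every quadric `Q_λ`. -/
def lineL4' (F : Type) [Field F] : Set (Submodule F (Fin 4 → F)) :=
  {l | isLine F l ∧ (l ⊓ planePi F) ∈ conicC F ∧ ∀ lam : F, secantTo F l lam}

/-- The collineations of `PG(3,q)` induced by the matrices `M(a,b,c,d)`,
`ad - bc ≠ 0`, acting on subspaces. -/
def Gcoll (F : Type) [Field F] : Set (Equiv.Perm (Submodule F (Fin 4 → F))) :=
  {σ | ∃ a b c d : F, a * d - b * c ≠ 0 ∧
    ∃ e : (Fin 4 → F) ≃ₗ[F] (Fin 4 → F),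
      (∀ v, e v = (Mmat F a b c d).mulVec v) ∧
      ∀ W : Submodule F (Fin 4 → F), σ W = W.map e.toLinearMap}

/-- The group `G ≃ PGL(2,q)`, as a group of collineations of `PG(3,q)`. -/
def G (F : Type) [Field F] : Subgroup (Equiv.Perm (Submodule F (Fin 4 → F))) :=
  Subgroup.closure (Gcoll F)

/-- `A = L₁' ∪ L₂' ∪ L₃ ∪ L₄'`. -/
def setA (F : Type) [Field F] : Set (Submodule F (Fin 4 → F)) :=
  lineL1' F ∪ lineL2' F ∪ lineL3 F ∪ lineL4' F

/-- `B = L₁ ∪ L₂ ∪ L₃' ∪ L₄`. -/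
def setB (F : Type) [Field F] : Set (Submodule F (Fin 4 → F)) :=
  lineL1 F ∪ lineL2 F ∪ lineL3' F ∪ lineL4 F

/-- `S_ℓ`: the lines of `S` meeting the line `ℓ` (in at least a point). -/
def linesMeeting (F : Type) [Field F] (S : Set (Submodule F (Fin 4 → F)))
    (l : Submodule F (Fin 4 → F)) : Set (Submodule F (Fin 4 → F)) :=
  {r | r ∈ S ∧ r ⊓ l ≠ ⊥}

/-- A spread of `PG(3,q)`: `q² + 1` pairwise disjoint lines. -/
def isSpread (F : Type) [Field F] (q : ℕ) (S : Set (Submodule F (Fin 4 → F))) : Prop :=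
  (∀ l ∈ S, isLine F l) ∧ S.ncard = q ^ 2 + 1 ∧
    ∀ l ∈ S, ∀ l' ∈ S, l ≠ l' → l ⊓ l' = ⊥

/-- A Cameron–Liebler line class with parameter `x`: a set of lines meeting every
spread in exactly `x` lines. -/
def isCameronLiebler (F : Type) [Field F] (q x : ℕ)
    (L : Set (Submodule F (Fin 4 → F))) : Prop :=
  (∀ l ∈ L, isLine F l) ∧ ∀ S, isSpread F q S → (L ∩ S).ncard = x

/-- `O_n`: the points off `Q_λ` at which `F_λ` evaluates to a nonsquare. -/
def setOn (F : Type) [Field F] (lam : F) : Set (Submodule F (Fin 4 → F)) :=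
  {P | isPoint F P ∧ ∀ v ∈ P, v ≠ 0 → ¬ IsSquare (Fq F lam v)}

/-- `O_s`: the points off `Q_λ` at which `F_λ` evaluates to a nonzero square. -/
def setOs (F : Type) [Field F] (lam : F) : Set (Submodule F (Fin 4 → F)) :=
  {P | isPoint F P ∧ ∀ v ∈ P, v ≠ 0 → Fq F lam v ≠ 0 ∧ IsSquare (Fq F lam v)}

/-- `T`: the tangent lines to `Q_λ` all of whose points off `Q_λ` lie in `O_n`. -/
def setT (F : Type) [Field F] (lam : F) : Set (Submodule F (Fin 4 → F)) :=
  {l | isLine F l ∧ tangentTo F l lam ∧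
    ∀ P, isPoint F P → P ≤ l → P ∉ quadric F lam → P ∈ setOn F lam}

/-- `S`: the secant lines to `Q_λ`. -/
def setS (F : Type) [Field F] (lam : F) : Set (Submodule F (Fin 4 → F)) :=
  {l | isLine F l ∧ secantTo F l lam}

/-- The symmetric bilinear form obtained by polarizing `F_λ`. -/
def polarFq (F : Type) [Field F] (lam : F) (u v : Fin 4 → F) : F :=
  Fq F lam (u + v) - Fq F lam u - Fq F lam v

theorem polarFq_eq (F : Type) [Field F] (lam : F) (u v : Fin 4 → F) :
    polarFq F lam u v =
      u 0 * v 2 + u 2 * v 0 - 2 * (u 1 * v 1) + lam * (2 * (u 3 * v 3)) := by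
  simp only [polarFq, Fq, Pi.add_apply]
  ring

/-- `W^{⊥_λ}`: the orthogonal complement of a subspace `W` with respect to the
symmetric bilinear form obtained by polarizing `F_λ`. -/
def perpLam (F : Type) [Field F] (lam : F) (W : Submodule F (Fin 4 → F)) :
    Submodule F (Fin 4 → F) where
  carrier := {v | ∀ u ∈ W, polarFq F lam u v = 0}
  add_mem' := by
    intro x y hx hy u hu
    have h1 := hx u hu
    have h2 := hy u hu
    rw [polarFq_eq] at h1 h2 ⊢
    simp only [Pi.add_apply]
    linear_combination h1 + h2
  zero_mem' := by
    intro u hu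
    rw [polarFq_eq]
    simp
  smul_mem' := by
    intro c x hx u hu
    have h1 := hx u hu
    rw [polarFq_eq] at h1 ⊢
    simp only [Pi.smul_apply, smul_eq_mul]
    linear_combination c * h1

open Submodule Module Set

variable {F : Type} [Field F]

instance submodFinite [Fintype F] : Finite (Submodule F (Fin 4 → F)) :=
  Finite.of_injective (fun W => (W : Set (Fin 4 → F))) SetLike.coe_injective

lemma Fq_smul (lam c : F) (v : Fin 4 → F) : Fq F lam (c • v) = c^2 * Fq F lam v := by
  simp only [Fq, Pi.smul_apply, smul_eq_mul]; ring

lemma Fq_comb (lam a b : F) (p w : Fin 4 → F) :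
    Fq F lam (a • p + b • w) =
      a^2 * Fq F lam p + a * b * polarFq F lam p w + b^2 * Fq F lam w := by
  rw [polarFq_eq]
  simp only [Fq, Pi.add_apply, Pi.smul_apply, smul_eq_mul]
  ring

lemma Fq_add (lam : F) (p w : Fin 4 → F) :
    Fq F lam (p + w) = Fq F lam p + polarFq F lam p w + Fq F lam w := by
  simp only [polarFq]; ring

lemma polar_comb (lam a b : F) (p x y : Fin 4 → F) :
    polarFq F lam p (a • x + b • y) =
      a * polarFq F lam p x + b * polarFq F lam p y := by
  simp only [polarFq_eq, Pi.add_apply, Pi.smul_apply, smul_eq_mul]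
  ring

lemma mem_planePi (v : Fin 4 → F) : v ∈ planePi F ↔ v 3 = 0 := Iff.rfl

lemma li_pair {x y : Fin 4 → F} (h : ∀ a b : F, a • x + b • y = 0 → a = 0 ∧ b = 0) :
    LinearIndependent F ![x, y] := by
  rw [Fintype.linearIndependent_iff]
  intro g hg
  have := h (g 0) (g 1) (by simpa [Fin.sum_univ_two] using hg)
  intro i; fin_cases i <;> simp [this.1, this.2]

omit [Field F] in
lemma range_pair (x y : Fin 4 → F) : Set.range ![x, y] = {x, y} := by
  ext z; simp [Fin.exists_fin_two]; tauto

lemma finrank_span_pair {x y : Fin 4 → F}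
    (h : ∀ a b : F, a • x + b • y = 0 → a = 0 ∧ b = 0) :
    Module.finrank F (span F {x, y}) = 2 := by
  have h2 := finrank_span_eq_card (b := ![x,y]) (li_pair h)
  rw [range_pair] at h2
  simpa using h2

lemma point_eq_span {P : Submodule F (Fin 4 → F)} (hP : Module.finrank F P = 1)
    {v : Fin 4 → F} (hv : v ∈ P) (h0 : v ≠ 0) : P = span F {v} := by
  symm
  apply Submodule.eq_of_le_of_finrank_le
  · rwa [span_singleton_le_iff_mem]
  · rw [hP, finrank_span_singleton h0]

lemma line_eq_span_pair {l : Submodule F (Fin 4 → F)} (hl : Module.finrank F l = 2)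
    {x y : Fin 4 → F} (hx : x ∈ l) (hy : y ∈ l)
    (h : ∀ a b : F, a • x + b • y = 0 → a = 0 ∧ b = 0) : l = span F {x, y} := by
  symm
  apply Submodule.eq_of_le_of_finrank_le
  · rw [span_le]; intro z hz
    rcases hz with rfl | rfl
    · exact hx
    · exact hy
  · rw [hl, finrank_span_pair h]

lemma mem_span_pair' {x y z : Fin 4 → F} (a b : F) (h : a • x + b • y = z) :
    z ∈ span F {x, y} := mem_span_pair.2 ⟨a, b, h⟩

lemma span_pair_smul {x y : Fin 4 → F} {c : F} (hc : c ≠ 0) :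
    span F {x, c • y} = span F {x, y} := by
  apply le_antisymm <;> rw [span_le] <;> rintro z (rfl | rfl)
  · exact mem_span_pair' 1 0 (by module)
  · exact mem_span_pair' 0 c (by module)
  · exact mem_span_pair' 1 0 (by module)
  · refine mem_span_pair' 0 c⁻¹ ?_
    rw [smul_smul, inv_mul_cancel₀ hc]
    module

lemma nonzero_of_li {x y : Fin 4 → F}
    (h : ∀ a b : F, a • x + b • y = 0 → a = 0 ∧ b = 0) : x ≠ 0 := by
  intro hx
  have := h 1 0 (by rw [hx]; module)
  exact one_ne_zero this.1

lemma point_span_mem_quadric {lam : F} {v : Fin 4 → F} (h0 : v ≠ 0)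
    (hv : Fq F lam v = 0) : span F {v} ∈ quadric F lam := by
  refine ⟨finrank_span_singleton h0, ?_⟩
  intro w hw
  rw [mem_span_singleton] at hw
  obtain ⟨c, rfl⟩ := hw
  rw [Fq_smul, hv, mul_zero]

/-- Workhorse: two points on a line with nonzero polar value. -/
lemma qpts_secant {lam : F} {p w : Fin 4 → F}
    (hli : ∀ a b : F, a • p + b • w = 0 → a = 0 ∧ b = 0)
    (hFp : Fq F lam p = 0) (hB : polarFq F lam p w ≠ 0) :
    qpts F lam (span F {p, w}) =
      {span F {p}, span F {(polarFq F lam p w) • w - (Fq F lam w) • p}} := by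
  set B := polarFq F lam p w with hBdef
  set Fw := Fq F lam w with hFwdef
  have hy : (-Fw) • p + B • w = B • w - Fw • p := by module
  have hy0 : B • w - Fw • p ≠ 0 := by
    intro h0
    rw [← hy] at h0
    exact hB ((hli _ _ h0).2)
  have hFy : Fq F lam (B • w - Fw • p) = 0 := by
    rw [← hy, Fq_comb, hFp]
    ring
  ext P
  constructor
  · rintro ⟨⟨hP1, hP2⟩, hPle⟩
    have hPbot : P ≠ ⊥ := by
      intro h; rw [h] at hP1; simp [isPoint] at hP1
    obtain ⟨x, hxP, hx0⟩ := (Submodule.ne_bot_iff P).1 hPbot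
    have hPx : P = span F {x} := point_eq_span hP1 hxP hx0
    obtain ⟨a, b, hab⟩ := mem_span_pair.1 (hPle hxP)
    have hFx : Fq F lam x = 0 := hP2 x hxP
    rw [← hab, Fq_comb, hFp] at hFx
    by_cases hb : b = 0
    · left
      subst hb
      rw [zero_smul, add_zero] at hab
      have ha : a ≠ 0 := by rintro rfl; rw [zero_smul] at hab; exact hx0 hab.symm
      rw [hPx, ← hab]
      exact span_singleton_smul_eq (isUnit_iff_ne_zero.2 ha) p
    · right
      have key : x = (b / B) • (B • w - Fw • p) := by
        have h1 : a * B = -(b * Fw) := by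
          have : b * (a * B + b * Fw) = 0 := by linear_combination hFx
          have h2 : a * B + b * Fw = 0 := by
            rcases mul_eq_zero.1 this with h | h
            · exact absurd h hb
            · exact h
          linear_combination h2
        rw [← hab]
        rw [smul_sub, smul_smul, smul_smul, div_mul_cancel₀ _ hB]
        have : b / B * Fw = -a := by
          rw [div_mul_eq_mul_div, div_eq_iff hB]
          linear_combination h1
        rw [this]
        module
      rw [hPx, key]
      exact span_singleton_smul_eq (isUnit_iff_ne_zero.2 (div_ne_zero hb hB)) _
  · have hple : p ∈ span F {p, w} := mem_span_pair' 1 0 (by module)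
    have hyle : B • w - Fw • p ∈ span F {p, w} := mem_span_pair' (-Fw) B hy
    rintro (rfl | rfl)
    · exact ⟨point_span_mem_quadric (nonzero_of_li hli) hFp,
        (span_singleton_le_iff_mem _ _).2 hple⟩
    · exact ⟨point_span_mem_quadric hy0 hFy,
        (span_singleton_le_iff_mem _ _).2 hyle⟩

lemma secant_of {lam : F} {p w : Fin 4 → F}
    (hli : ∀ a b : F, a • p + b • w = 0 → a = 0 ∧ b = 0)
    (hFp : Fq F lam p = 0) (hB : polarFq F lam p w ≠ 0) :
    secantTo F (span F {p, w}) lam := by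
  unfold secantTo
  rw [qpts_secant hli hFp hB]
  apply Set.ncard_pair
  intro h
  obtain ⟨c, hc⟩ := mem_span_singleton.1 (h ▸ mem_span_singleton_self p)
  have key : (1 + c * Fq F lam w) • p + (-(c * polarFq F lam p w)) • w =
      p - c • (polarFq F lam p w • w - Fq F lam w • p) := by module
  rw [hc, sub_self] at key
  have h2 := hli _ _ key
  have hc0 : c = 0 := by
    rcases mul_eq_zero.1 (neg_eq_zero.1 h2.2) with h' | h'
    · exact h'
    · exact absurd h' hB
  rw [hc0] at h2
  simpa using h2.1

lemma qpts_tangent {lam : F} {p w : Fin 4 → F}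
    (hli : ∀ a b : F, a • p + b • w = 0 → a = 0 ∧ b = 0)
    (hFp : Fq F lam p = 0) (hB : polarFq F lam p w = 0) (hFw : Fq F lam w ≠ 0) :
    qpts F lam (span F {p, w}) = {span F {p}} := by
  ext P
  constructor
  · rintro ⟨⟨hP1, hP2⟩, hPle⟩
    have hPbot : P ≠ ⊥ := by
      intro h; rw [h] at hP1; simp [isPoint] at hP1
    obtain ⟨x, hxP, hx0⟩ := (Submodule.ne_bot_iff P).1 hPbot
    have hPx : P = span F {x} := point_eq_span hP1 hxP hx0
    obtain ⟨a, b, hab⟩ := mem_span_pair.1 (hPle hxP)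
    have hFx : Fq F lam x = 0 := hP2 x hxP
    rw [← hab, Fq_comb, hFp, hB] at hFx
    have hb : b = 0 := by
      have : b^2 = 0 := by
        rcases mul_eq_zero.1 (by linear_combination hFx : b^2 * Fq F lam w = 0) with h | h
        · exact h
        · exact absurd h hFw
      exact pow_eq_zero_iff (by norm_num) |>.1 this
    subst hb
    rw [zero_smul, add_zero] at hab
    have ha : a ≠ 0 := by rintro rfl; rw [zero_smul] at hab; exact hx0 hab.symm
    rw [Set.mem_singleton_iff, hPx, ← hab]
    exact span_singleton_smul_eq (isUnit_iff_ne_zero.2 ha) p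
  · rintro rfl
    refine ⟨point_span_mem_quadric (nonzero_of_li hli) hFp, ?_⟩
    rw [span_singleton_le_iff_mem]
    exact mem_span_pair' 1 0 (by module)

lemma tangent_count {lam : F} {p w : Fin 4 → F}
    (hli : ∀ a b : F, a • p + b • w = 0 → a = 0 ∧ b = 0)
    (hFp : Fq F lam p = 0) (hB : polarFq F lam p w = 0) (hFw : Fq F lam w ≠ 0) :
    (qpts F lam (span F {p, w})).ncard = 1 := by
  rw [qpts_tangent hli hFp hB hFw]
  exact Set.ncard_singleton _

lemma not_secant_full [Fintype F] {lam : F} {p w : Fin 4 → F}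
    (hli : ∀ a b : F, a • p + b • w = 0 → a = 0 ∧ b = 0)
    (hFp : Fq F lam p = 0) (hFw : Fq F lam w = 0) (hB : polarFq F lam p w = 0) :
    ¬ secantTo F (span F {p, w}) lam := by
  intro hs
  have hp0 : p ≠ 0 := nonzero_of_li hli
  have hw0 : w ≠ 0 := by
    intro h
    exact one_ne_zero (hli 0 1 (by rw [h]; module)).2
  have hpw0 : p + w ≠ 0 := by
    intro h
    exact one_ne_zero (hli 1 1 (by rw [← h]; module)).1
  have hFpw : Fq F lam (p + w) = 0 := by rw [Fq_add, hFp, hFw, hB]; ring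
  have hsub : ({span F {p}, span F {w}, span F {p + w}} : Set (Submodule F (Fin 4 → F)))
      ⊆ qpts F lam (span F {p, w}) := by
    rintro P (rfl | rfl | rfl)
    · exact ⟨point_span_mem_quadric hp0 hFp,
        (span_singleton_le_iff_mem _ _).2 (mem_span_pair' 1 0 (by module))⟩
    · exact ⟨point_span_mem_quadric hw0 hFw,
        (span_singleton_le_iff_mem _ _).2 (mem_span_pair' 0 1 (by module))⟩
    · exact ⟨point_span_mem_quadric hpw0 hFpw,
        (span_singleton_le_iff_mem _ _).2 (mem_span_pair' 1 1 (by module))⟩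
  have hne1 : span F {p} ≠ span F {w} := by
    intro h
    obtain ⟨c, hc⟩ := mem_span_singleton.1 (h ▸ mem_span_singleton_self p)
    exact one_ne_zero (hli 1 (-c) (by rw [← hc]; module)).1
  have hne2 : span F {p} ≠ span F {p + w} := by
    intro h
    obtain ⟨c, hc⟩ := mem_span_singleton.1 (h.symm ▸ mem_span_singleton_self (p + w))
    exact one_ne_zero (hli (1 - c) 1 (by rw [← sub_eq_zero.2 hc.symm]; module)).2
  have hne3 : span F {w} ≠ span F {p + w} := by
    intro h
    obtain ⟨c, hc⟩ := mem_span_singleton.1 (h.symm ▸ mem_span_singleton_self (p + w))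
    exact one_ne_zero (hli 1 (1 - c) (by rw [← sub_eq_zero.2 hc.symm]; module)).1
  have h3 : ({span F {p}, span F {w}, span F {p + w}} : Set (Submodule F (Fin 4 → F))).ncard = 3 := by
    rw [Set.ncard_insert_of_notMem (by simp [hne1, hne2]) (Set.toFinite _),
      Set.ncard_pair hne3]
  have hle := Set.ncard_le_ncard hsub (Set.toFinite _)
  rw [h3, hs] at hle
  omega


lemma single_eq_e3 : (Pi.single 3 1 : Fin 4 → F) = ![0,0,0,1] := by
  ext i; fin_cases i <;> simp [Pi.single_apply]

lemma pointU4_eq : pointU4 F = span F {![0,0,0,1]} := by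
  rw [pointU4, single_eq_e3]

lemma uniq4 {p u u' : Fin 4 → F}
    (hLI : LinearIndependent F ![p, u, u', ![0,0,0,1]]) :
    ∀ a b c d : F, a•p + b•u + c•u' + d•(![0,0,0,1] : Fin 4 → F) = 0 →
      a = 0 ∧ b = 0 ∧ c = 0 ∧ d = 0 := by
  intro a b c d h
  have h2 := Fintype.linearIndependent_iff.1 hLI ![a,b,c,d] (by
    simpa [Fin.sum_univ_four] using h)
  exact ⟨h2 0, h2 1, h2 2, h2 3⟩

lemma decomp4 {p u u' : Fin 4 → F}
    (hLI : LinearIndependent F ![p, u, u', ![0,0,0,1]]) (w : Fin 4 → F) :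
    ∃ a b c d : F, w = a•p + b•u + c•u' + d•(![0,0,0,1] : Fin 4 → F) := by
  have htop : span F (Set.range ![p,u,u',(![0,0,0,1] : Fin 4 → F)]) = ⊤ := by
    apply hLI.span_eq_top_of_card_eq_finrank
    simp
  have hw : w ∈ span F (Set.range ![p,u,u',(![0,0,0,1] : Fin 4 → F)]) := by
    rw [htop]; trivial
  rw [mem_span_range_iff_exists_fun] at hw
  obtain ⟨c, hc⟩ := hw
  exact ⟨c 0, c 1, c 2, c 3, by rw [← hc]; simp [Fin.sum_univ_four]⟩

lemma coord3 {p u u' : Fin 4 → F} (hp3 : p 3 = 0) (hu3 : u 3 = 0) (hu'3 : u' 3 = 0)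
    (a b c d : F) : (a•p + b•u + c•u' + d•(![0,0,0,1] : Fin 4 → F)) 3 = d := by
  simp [hp3, hu3, hu'3]

lemma shape_in_pi {p u u' : Fin 4 → F}
    (hLI : LinearIndependent F ![p, u, u', ![0,0,0,1]])
    (hp3 : p 3 = 0) (hu3 : u 3 = 0) (hu'3 : u' 3 = 0)
    {l : Submodule F (Fin 4 → F)} (hl : isLine F l) (hlpi : l ≤ planePi F)
    (hpl : p ∈ l) :
    (∃ β : F, l = span F {p, u + β • u'}) ∨ l = span F {p, u'} := by
  have uniq := uniq4 hLI
  have hp0 : p ≠ 0 := by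
    intro h
    exact one_ne_zero (uniq 1 0 0 0 (by rw [h]; module)).1
  have hlt : span F {p} < l := by
    rcases lt_or_eq_of_le ((span_singleton_le_iff_mem _ _).2 hpl) with h | h
    · exact h
    · exfalso
      have h1 : Module.finrank F (span F {p}) = 1 := finrank_span_singleton hp0
      rw [h, hl] at h1
      norm_num at h1
  obtain ⟨w, hwl, hwp⟩ := SetLike.exists_of_lt hlt
  obtain ⟨a, b, c, d, hw⟩ := decomp4 hLI w
  have hd : d = 0 := by
    have h3 : w 3 = 0 := hlpi hwl
    rw [hw, coord3 hp3 hu3 hu'3] at h3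
    exact h3
  subst hd
  rw [zero_smul, add_zero] at hw
  have hbc : ¬ (b = 0 ∧ c = 0) := by
    rintro ⟨rfl, rfl⟩
    apply hwp
    rw [hw]
    simp only [zero_smul, add_zero]
    exact smul_mem _ a (mem_span_singleton_self p)
  have hw'l : b•u + c•u' ∈ l := by
    have : b•u + c•u' = w - a•p := by rw [hw]; module
    rw [this]
    exact sub_mem hwl (smul_mem _ a hpl)
  have hli2 : ∀ x y : F, x • p + y • (b•u + c•u') = 0 → x = 0 ∧ y = 0 := by
    intro x y h
    have h2 : x•p + (y*b)•u + (y*c)•u' + (0:F)•(![0,0,0,1] : Fin 4 → F) =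
        x • p + y • (b•u + c•u') := by module
    rw [h] at h2
    obtain ⟨hx, hyb, hyc, -⟩ := uniq _ _ _ _ h2
    refine ⟨hx, ?_⟩
    by_cases hb : b = 0
    · rcases mul_eq_zero.1 hyc with h' | h'
      · exact h'
      · exact absurd ⟨hb, h'⟩ hbc
    · rcases mul_eq_zero.1 hyb with h' | h'
      · exact h'
      · exact absurd h' hb
  have hleq : l = span F {p, b•u + c•u'} := line_eq_span_pair hl hpl hw'l hli2
  by_cases hb : b = 0
  · right
    subst hb
    rw [zero_smul, zero_add] at hleq
    have hc : c ≠ 0 := fun h => hbc ⟨rfl, h⟩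
    rw [hleq, span_pair_smul hc]
  · left
    refine ⟨c / b, ?_⟩
    have he : b•u + c•u' = b • (u + (c/b) • u') := by
      rw [smul_add, smul_smul, mul_div_cancel₀ _ hb]
    rw [hleq, he, span_pair_smul hb]

lemma shape_off_pi {p u u' : Fin 4 → F}
    (hLI : LinearIndependent F ![p, u, u', ![0,0,0,1]])
    (hp3 : p 3 = 0) (hu3 : u 3 = 0) (hu'3 : u' 3 = 0)
    {l : Submodule F (Fin 4 → F)} (hl : isLine F l) (hnle : ¬ l ≤ planePi F)
    (hpl : p ∈ l) :
    ∃ α β : F, l = span F {p, ![0,0,0,1] + α • u + β • u'} := by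
  have uniq := uniq4 hLI
  obtain ⟨w, hwl, hw3⟩ : ∃ w ∈ l, w 3 ≠ 0 := by
    by_contra h
    push_neg at h
    exact hnle (fun v hv => h v hv)
  obtain ⟨a, b, c, d, hw⟩ := decomp4 hLI w
  have hd : d ≠ 0 := by
    rw [hw, coord3 hp3 hu3 hu'3] at hw3
    exact hw3
  refine ⟨b/d, c/d, ?_⟩
  have hyl : (![0,0,0,1] : Fin 4 → F) + (b/d) • u + (c/d) • u' ∈ l := by
    have he : (![0,0,0,1] : Fin 4 → F) + (b/d) • u + (c/d) • u' =
        d⁻¹ • w - (a/d) • p := by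
      rw [hw]
      match_scalars <;> field_simp <;> ring
    rw [he]
    exact sub_mem (smul_mem _ _ hwl) (smul_mem _ _ hpl)
  apply line_eq_span_pair hl hpl hyl
  intro x y h
  have h2 : x•p + (y*(b/d))•u + (y*(c/d))•u' + y•(![0,0,0,1] : Fin 4 → F) =
      x • p + y • ((![0,0,0,1] : Fin 4 → F) + (b/d) • u + (c/d) • u') := by module
  rw [h] at h2
  obtain ⟨hx, -, -, hy⟩ := uniq _ _ _ _ h2
  exact ⟨hx, hy⟩

lemma pair_li_of_uniq {p u u' : Fin 4 → F}
    (hLI : LinearIndependent F ![p, u, u', ![0,0,0,1]]) (b c d : F)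
    (hbcd : ¬ (b = 0 ∧ c = 0 ∧ d = 0)) :
    ∀ x y : F, x • p + y • (b•u + c•u' + d•(![0,0,0,1] : Fin 4 → F)) = 0 →
      x = 0 ∧ y = 0 := by
  intro x y h
  have h2 : x•p + (y*b)•u + (y*c)•u' + (y*d)•(![0,0,0,1] : Fin 4 → F) =
      x • p + y • (b•u + c•u' + d•(![0,0,0,1] : Fin 4 → F)) := by module
  rw [h] at h2
  obtain ⟨hx, hyb, hyc, hyd⟩ := uniq4 hLI _ _ _ _ h2
  refine ⟨hx, ?_⟩
  by_cases hy : y = 0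
  · exact hy
  · exfalso
    apply hbcd
    exact ⟨(mul_eq_zero.1 hyb).resolve_left hy, (mul_eq_zero.1 hyc).resolve_left hy,
      (mul_eq_zero.1 hyd).resolve_left hy⟩

lemma inj_beta {p u u' : Fin 4 → F}
    (hLI : LinearIndependent F ![p, u, u', ![0,0,0,1]]) {β γ : F}
    (h : span F {p, u + β•u'} = span F {p, u + γ•u'}) : β = γ := by
  have hm : u + β•u' ∈ span F {p, u + γ•u'} := by
    rw [← h]
    exact mem_span_pair' 0 1 (by module)
  obtain ⟨x, y, hxy⟩ := mem_span_pair.1 hm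
  have h2 : x•p + (y-1)•u + (y*γ - β)•u' + (0:F)•(![0,0,0,1] : Fin 4 → F) =
      (x•p + y•(u + γ•u')) - (u + β•u') := by module
  rw [hxy, sub_self] at h2
  obtain ⟨-, hy1, hyg, -⟩ := uniq4 hLI _ _ _ _ h2
  have hy : y = 1 := sub_eq_zero.1 hy1
  rw [hy, one_mul] at hyg
  exact (sub_eq_zero.1 hyg).symm

lemma ne_u' {p u u' : Fin 4 → F}
    (hLI : LinearIndependent F ![p, u, u', ![0,0,0,1]]) (β : F) :
    span F {p, u'} ≠ span F {p, u + β•u'} := by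
  intro h
  have hm : u' ∈ span F {p, u + β•u'} := by
    rw [← h]
    exact mem_span_pair' 0 1 (by module)
  obtain ⟨x, y, hxy⟩ := mem_span_pair.1 hm
  have h2 : x•p + y•u + (y*β - 1)•u' + (0:F)•(![0,0,0,1] : Fin 4 → F) =
      (x•p + y•(u + β•u')) - u' := by module
  rw [hxy, sub_self] at h2
  obtain ⟨-, hy, hyb, -⟩ := uniq4 hLI _ _ _ _ h2
  rw [hy, zero_mul] at hyb
  norm_num at hyb

lemma inj_ab {p u u' : Fin 4 → F}
    (hLI : LinearIndependent F ![p, u, u', ![0,0,0,1]]) {α β α' β' : F}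
    (h : span F {p, ![0,0,0,1] + α•u + β•u'} = span F {p, ![0,0,0,1] + α'•u + β'•u'}) :
    α = α' ∧ β = β' := by
  have hm : (![0,0,0,1] : Fin 4 → F) + α•u + β•u' ∈
      span F {p, ![0,0,0,1] + α'•u + β'•u'} := by
    rw [← h]
    exact mem_span_pair' 0 1 (by module)
  obtain ⟨x, y, hxy⟩ := mem_span_pair.1 hm
  have h2 : x•p + (y*α' - α)•u + (y*β' - β)•u' + (y-1)•(![0,0,0,1] : Fin 4 → F) =
      (x•p + y•((![0,0,0,1] : Fin 4 → F) + α'•u + β'•u')) -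
        ((![0,0,0,1] : Fin 4 → F) + α•u + β•u') := by module
  rw [hxy, sub_self] at h2
  obtain ⟨-, ha, hb, hy1⟩ := uniq4 hLI _ _ _ _ h2
  have hy : y = 1 := sub_eq_zero.1 hy1
  rw [hy, one_mul] at ha hb
  exact ⟨(sub_eq_zero.1 ha).symm, (sub_eq_zero.1 hb).symm⟩

lemma conic_pts_eq {l : Submodule F (Fin 4 → F)} (hl : l ≤ planePi F) :
    {P | P ∈ conicC F ∧ P ≤ l} = qpts F 0 l := by
  ext P
  constructor
  · rintro ⟨⟨h1, h2⟩, h3⟩; exact ⟨h1, h3⟩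
  · rintro ⟨h1, h2⟩; exact ⟨⟨h1, le_trans h2 hl⟩, h2⟩

lemma Fq_lam_of_pi {v : Fin 4 → F} (hv3 : v 3 = 0) (lam : F) :
    Fq F lam v = Fq F 0 v := by
  simp [Fq, hv3]

lemma polar_lam_of_pi {p w : Fin 4 → F} (hp3 : p 3 = 0) (lam : F) :
    polarFq F lam p w = polarFq F 0 p w := by
  rw [polarFq_eq, polarFq_eq, hp3]
  ring

lemma polar_comb3 (lam a b : F) (p x y z : Fin 4 → F) :
    polarFq F lam p (x + a•y + b•z) =
      polarFq F lam p x + a * polarFq F lam p y + b * polarFq F lam p z := by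
  simp only [polarFq_eq, Pi.add_apply, Pi.smul_apply, smul_eq_mul]
  ring

lemma Fq_lam_split (lam : F) (w : Fin 4 → F) :
    Fq F lam w = Fq F 0 w + lam * (w 3)^2 := by
  simp [Fq]

lemma secant_count {lam : F} {p w : Fin 4 → F}
    (hli : ∀ a b : F, a • p + b • w = 0 → a = 0 ∧ b = 0)
    (hFp : Fq F lam p = 0) (hB : polarFq F lam p w ≠ 0) :
    (qpts F lam (span F {p, w})).ncard = 2 :=
  secant_of hli hFp hB

lemma ncard_ne_singleton [Fintype F] (q : ℕ) (hq : Fintype.card F = q) (a : F) :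
    ({b : F | b ≠ a}).ncard = q - 1 := by
  have he : {b : F | b ≠ a} = Set.univ \ {a} := by
    ext b; simp
  rw [he, Set.ncard_diff (Set.subset_univ _) (Set.toFinite _), Set.ncard_univ,
    Set.ncard_singleton, Nat.card_eq_fintype_card, hq]

lemma ncard_good_pairs [Fintype F] (q : ℕ) (hq : Fintype.card F = q)
    (A B : F) (hB : B ≠ 0) :
    ({ab : F × F | ab.1 * A + ab.2 * B ≠ 0}).ncard = q * (q - 1) := by
  have hiff : ∀ x y : F, (x*A + y*B = 0) ↔ y = -(x*A)/B := by
    intro x y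
    rw [eq_div_iff hB]
    constructor <;> intro h <;> linear_combination h
  have hset : {ab : F × F | ab.1 * A + ab.2 * B ≠ 0} =
      Set.univ \ ((fun a : F => (a, -(a*A)/B)) '' Set.univ) := by
    ext ⟨x, y⟩
    simp only [Set.mem_setOf_eq, Set.mem_diff, Set.mem_univ, true_and,
      Set.mem_image]
    constructor
    · intro h
      rintro ⟨a, ha⟩
      apply h
      have h1 : a = x := congrArg Prod.fst ha
      have h2 : -(a*A)/B = y := congrArg Prod.snd ha
      subst h1
      exact (hiff _ _).2 h2.symm
    · intro h hc
      refine h ⟨x, ?_⟩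
      have hy := (hiff _ _).1 hc
      rw [hy]
  rw [hset, Set.ncard_diff (Set.subset_univ _) (Set.toFinite _), Set.ncard_univ]
  have him : ((fun a : F => (a, -(a*A)/B)) '' Set.univ).ncard = q := by
    rw [Set.ncard_image_of_injOn (fun a _ b _ h => congrArg Prod.fst h),
      Set.ncard_univ, Nat.card_eq_fintype_card, hq]
  rw [him, Nat.card_eq_fintype_card, Fintype.card_prod, hq]
  have hq1 : 1 ≤ q := hq ▸ Fintype.card_pos
  obtain ⟨k, rfl⟩ : ∃ k, q = k + 1 := ⟨q - 1, by omega⟩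
  have e : (k+1)*(k+1) = (k+1)*k + (k+1) := by ring
  have e2 : (k+1)*((k+1)-1) = (k+1)*k := by simp
  omega

lemma main [Fintype F] (q : ℕ) (hq : Fintype.card F = q)
    {p u u' : Fin 4 → F}
    (hp3 : p 3 = 0) (hu3 : u 3 = 0) (hu'3 : u' 3 = 0)
    (hpC : Fq F 0 p = 0)
    (hLI : LinearIndependent F ![p, u, u', ![0,0,0,1]])
    (hphiu' : polarFq F 0 p u' ≠ 0)
    (hNL : ∀ b c : F, ¬(b = 0 ∧ c = 0) → polarFq F 0 p (b•u + c•u') = 0 →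
      Fq F 0 (b•u + c•u') ≠ 0) :
      ({l | l ∈ lineL1 F ∧ span F {p} ≤ l}).ncard = 1 ∧
      ({l | l ∈ lineL3 F ∧ span F {p} ≤ l}).ncard = q ∧
      ({l | l ∈ lineL1' F ∧ span F {p} ≤ l}).ncard = 1 ∧
      ({l | l ∈ lineL4' F ∧ span F {p} ≤ l}).ncard = q * (q - 1) ∧
      {l | l ∈ lineL2 F ∧ span F {p} ≤ l} = ∅ ∧
      {l | l ∈ lineL4 F ∧ span F {p} ≤ l} = ∅ ∧
      {l | l ∈ lineL2' F ∧ span F {p} ≤ l} = ∅ ∧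
      {l | l ∈ lineL3' F ∧ span F {p} ≤ l} = ∅ := by
  have uniq := uniq4 hLI
  have hp0 : p ≠ 0 := by
    intro h
    exact one_ne_zero (uniq 1 0 0 0 (by rw [h]; module)).1
  have hppi : p ∈ planePi F := hp3
  have hPconic : span F {p} ∈ conicC F :=
    ⟨point_span_mem_quadric hp0 hpC, (span_singleton_le_iff_mem _ _).2 hppi⟩
  have hFp_all : ∀ lam : F, Fq F lam p = 0 := fun lam => by
    rw [Fq_lam_of_pi hp3]; exact hpC
  have hφval : ∀ β : F, polarFq F 0 p (u + β•u') =
      polarFq F 0 p u + β * polarFq F 0 p u' := by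
    intro β
    have := polar_comb 0 1 β p u u'
    simpa using this
  have hφe3 : polarFq F 0 p (![0,0,0,1] : Fin 4 → F) = 0 := by
    rw [polarFq_eq]; norm_num; exact Or.inr rfl
  have hφw : ∀ (lam α β : F), polarFq F lam p (![0,0,0,1] + α•u + β•u') =
      α * polarFq F 0 p u + β * polarFq F 0 p u' := by
    intro lam α β
    rw [polar_lam_of_pi hp3, polar_comb3, hφe3, zero_add]
  set β₀ : F := -(polarFq F 0 p u)/(polarFq F 0 p u') with hβ₀
  have hphi_iff : ∀ β : F, polarFq F 0 p (u + β•u') = 0 ↔ β = β₀ := by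
    intro β
    rw [hφval, hβ₀, eq_div_iff hphiu']
    constructor <;> intro h <;> linear_combination h
  -- pairwise independence helpers
  have hli_b : ∀ β : F, ∀ x y : F, x • p + y • (u + β•u') = 0 → x = 0 ∧ y = 0 := by
    intro β x y h
    have h2 : x•p + y•u + (y*β)•u' + (0:F)•(![0,0,0,1] : Fin 4 → F) =
        x • p + y • (u + β•u') := by module
    rw [h] at h2
    obtain ⟨hx, hy, -, -⟩ := uniq _ _ _ _ h2
    exact ⟨hx, hy⟩
  have hli_u' : ∀ x y : F, x • p + y • u' = 0 → x = 0 ∧ y = 0 := by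
    intro x y h
    have h2 : x•p + (0:F)•u + y•u' + (0:F)•(![0,0,0,1] : Fin 4 → F) =
        x • p + y • u' := by module
    rw [h] at h2
    obtain ⟨hx, -, hy, -⟩ := uniq _ _ _ _ h2
    exact ⟨hx, hy⟩
  have hli_e3 : ∀ x y : F, x • p + y • (![0,0,0,1] : Fin 4 → F) = 0 → x = 0 ∧ y = 0 := by
    intro x y h
    have h2 : x•p + (0:F)•u + (0:F)•u' + y•(![0,0,0,1] : Fin 4 → F) =
        x • p + y • (![0,0,0,1] : Fin 4 → F) := by module
    rw [h] at h2
    obtain ⟨hx, -, -, hy⟩ := uniq _ _ _ _ h2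
    exact ⟨hx, hy⟩
  have hli_w : ∀ α β : F, ∀ x y : F,
      x • p + y • ((![0,0,0,1] : Fin 4 → F) + α•u + β•u') = 0 → x = 0 ∧ y = 0 := by
    intro α β x y h
    have h2 : x•p + (y*α)•u + (y*β)•u' + y•(![0,0,0,1] : Fin 4 → F) =
        x • p + y • ((![0,0,0,1] : Fin 4 → F) + α•u + β•u') := by module
    rw [h] at h2
    obtain ⟨hx, -, -, hy⟩ := uniq _ _ _ _ h2
    exact ⟨hx, hy⟩
  -- membership of generators in planes
  have hw1pi : ∀ β : F, (u + β•u') ∈ planePi F := by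
    intro β
    show (u + β•u') 3 = 0
    simp [hu3, hu'3]
  have hu'pi : u' ∈ planePi F := hu'3
  have hwcoord3 : ∀ α β : F, ((![0,0,0,1] : Fin 4 → F) + α•u + β•u') 3 = 1 := by
    intro α β
    have h1 : (![0,0,0,1] : Fin 4 → F) 3 = 1 := rfl
    simp only [Pi.add_apply, Pi.smul_apply, smul_eq_mul, hu3, hu'3, h1]
    ring
  -- lines lying in the plane pi
  have hlinepi_b : ∀ β : F, span F {p, u + β•u'} ≤ planePi F := by
    intro β
    rw [span_le]
    rintro z (rfl | rfl)
    · exact hppi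
    · exact hw1pi β
  have hlinepi_u' : span F {p, u'} ≤ planePi F := by
    rw [span_le]
    rintro z (rfl | rfl)
    · exact hppi
    · exact hu'pi
  -- conic point counts on lines of pi through P
  have hcnt_b : ∀ β : F, β ≠ β₀ →
      ({P | P ∈ conicC F ∧ P ≤ span F {p, u + β•u'}}).ncard = 2 := by
    intro β hβ
    rw [conic_pts_eq (hlinepi_b β)]
    exact secant_count (hli_b β) hpC (fun h => hβ ((hphi_iff β).1 h))
  have hcnt_b0 : ({P | P ∈ conicC F ∧ P ≤ span F {p, u + β₀•u'}}).ncard = 1 := by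
    rw [conic_pts_eq (hlinepi_b β₀)]
    have hz : polarFq F 0 p (u + β₀•u') = 0 := (hphi_iff β₀).2 rfl
    have hFw : Fq F 0 (u + β₀•u') ≠ 0 := by
      have := hNL 1 β₀ (by simp) (by simpa using hz)
      simpa using this
    exact tangent_count (hli_b β₀) hpC hz hFw
  have hcnt_u' : ({P | P ∈ conicC F ∧ P ≤ span F {p, u'}}).ncard = 2 := by
    rw [conic_pts_eq hlinepi_u']
    exact secant_count hli_u' hpC hphiu'
  -- (1) tangent lines of pi through P
  have hset1 : {l | l ∈ lineL1 F ∧ span F {p} ≤ l} = {span F {p, u + β₀ • u'}} := by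
    ext l
    simp only [Set.mem_setOf_eq, Set.mem_singleton_iff]
    constructor
    · rintro ⟨⟨hl, hlpi, hcnt⟩, hPl⟩
      have hpl : p ∈ l := hPl (mem_span_singleton_self p)
      rcases shape_in_pi hLI hp3 hu3 hu'3 hl hlpi hpl with ⟨β, rfl⟩ | rfl
      · by_cases hβ : β = β₀
        · rw [hβ]
        · rw [hcnt_b β hβ] at hcnt
          norm_num at hcnt
      · rw [hcnt_u'] at hcnt
        norm_num at hcnt
    · rintro rfl
      refine ⟨⟨finrank_span_pair (hli_b β₀), hlinepi_b β₀, hcnt_b0⟩, ?_⟩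
      rw [span_singleton_le_iff_mem]
      exact mem_span_pair' 1 0 (by module)
  have hans1 : ({l | l ∈ lineL1 F ∧ span F {p} ≤ l}).ncard = 1 := by
    rw [hset1]
    exact Set.ncard_singleton _
  -- (2) secant lines of pi through P
  have hset3 : {l | l ∈ lineL3 F ∧ span F {p} ≤ l} =
      insert (span F {p, u'})
        ((fun β : F => span F {p, u + β • u'}) '' {β : F | β ≠ β₀}) := by
    ext l
    simp only [Set.mem_setOf_eq, Set.mem_insert_iff, Set.mem_image]
    constructor
    · rintro ⟨⟨hl, hlpi, hcnt⟩, hPl⟩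
      have hpl : p ∈ l := hPl (mem_span_singleton_self p)
      rcases shape_in_pi hLI hp3 hu3 hu'3 hl hlpi hpl with ⟨β, rfl⟩ | rfl
      · right
        refine ⟨β, ?_, rfl⟩
        intro hβ
        rw [hβ, hcnt_b0] at hcnt
        norm_num at hcnt
      · left; rfl
    · rintro (rfl | ⟨β, hβ, rfl⟩)
      · exact ⟨⟨finrank_span_pair hli_u', hlinepi_u', hcnt_u'⟩,
          (span_singleton_le_iff_mem _ _).2 (mem_span_pair' 1 0 (by module))⟩
      · exact ⟨⟨finrank_span_pair (hli_b β), hlinepi_b β, hcnt_b β hβ⟩,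
          (span_singleton_le_iff_mem _ _).2 (mem_span_pair' 1 0 (by module))⟩
  have hans3 : ({l | l ∈ lineL3 F ∧ span F {p} ≤ l}).ncard = q := by
    rw [hset3]
    have hnm : span F {p, u'} ∉
        (fun β : F => span F {p, u + β • u'}) '' {β : F | β ≠ β₀} := by
      rintro ⟨β, -, hβ⟩
      exact ne_u' hLI β hβ.symm
    rw [Set.ncard_insert_of_notMem hnm (Set.toFinite _),
      Set.ncard_image_of_injOn (fun a _ b _ h => inj_beta hLI h),
      ncard_ne_singleton q hq β₀]
    have hq1 : 1 ≤ q := hq ▸ Fintype.card_pos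
    omega
  -- (3) generator of the cone through P
  have hset1' : {l | l ∈ lineL1' F ∧ span F {p} ≤ l} = {span F {p, ![0,0,0,1]}} := by
    ext l
    simp only [Set.mem_setOf_eq, Set.mem_singleton_iff]
    constructor
    · rintro ⟨⟨hl, hU4, -⟩, hPl⟩
      have hpl : p ∈ l := hPl (mem_span_singleton_self p)
      rw [pointU4_eq, span_singleton_le_iff_mem] at hU4
      exact line_eq_span_pair hl hpl hU4 hli_e3
    · rintro rfl
      refine ⟨⟨finrank_span_pair hli_e3, ?_, ?_⟩, ?_⟩
      · rw [pointU4_eq, span_singleton_le_iff_mem]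
        exact mem_span_pair' 0 1 (by module)
      · intro v hv
        obtain ⟨a, b, hab⟩ := mem_span_pair.1 hv
        have hFe3 : Fq F 0 (![0,0,0,1] : Fin 4 → F) = 0 := by norm_num [Fq]
        rw [← hab, Fq_comb, hpC, hφe3, hFe3]
        ring
      · rw [span_singleton_le_iff_mem]
        exact mem_span_pair' 1 0 (by module)
  have hans1' : ({l | l ∈ lineL1' F ∧ span F {p} ≤ l}).ncard = 1 := by
    rw [hset1']
    exact Set.ncard_singleton _
  -- (4) lines secant to all quadrics through P
  have hinf : ∀ α β : F, span F {p, ![0,0,0,1] + α•u + β•u'} ⊓ planePi F = span F {p} := by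
    intro α β
    apply le_antisymm
    · intro v hv
      obtain ⟨hv1, hv2⟩ := Submodule.mem_inf.1 hv
      obtain ⟨a, b, hab⟩ := mem_span_pair.1 hv1
      have hb : b = 0 := by
        have h3 : v 3 = 0 := hv2
        rw [← hab] at h3
        have hcomp : (a•p + b•((![0,0,0,1] : Fin 4 → F) + α•u + β•u')) 3 = b := by
          simp only [Pi.add_apply, Pi.smul_apply, smul_eq_mul, hp3, hwcoord3 α β]
          ring
        rw [hcomp] at h3
        exact h3
      rw [hb, zero_smul, add_zero] at hab
      rw [← hab]
      exact smul_mem _ a (mem_span_singleton_self p)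
    · exact le_inf ((span_singleton_le_iff_mem _ _).2 (mem_span_pair' 1 0 (by module)))
        ((span_singleton_le_iff_mem _ _).2 hppi)
  have hset4' : {l | l ∈ lineL4' F ∧ span F {p} ≤ l} =
      (fun ab : F × F => span F {p, ![0,0,0,1] + ab.1•u + ab.2•u'}) ''
        {ab : F × F | ab.1 * polarFq F 0 p u + ab.2 * polarFq F 0 p u' ≠ 0} := by
    ext l
    simp only [Set.mem_setOf_eq, Set.mem_image, Prod.exists]
    constructor
    · rintro ⟨⟨hl, hconic, hsec⟩, hPl⟩
      have hpl : p ∈ l := hPl (mem_span_singleton_self p)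
      have hnle : ¬ l ≤ planePi F := by
        intro hle
        have h1 : l ⊓ planePi F = l := inf_eq_left.2 hle
        rw [h1] at hconic
        have h2 : Module.finrank F l = 1 := hconic.1.1
        have h3 : Module.finrank F l = 2 := hl
        omega
      obtain ⟨α, β, rfl⟩ := shape_off_pi hLI hp3 hu3 hu'3 hl hnle hpl
      refine ⟨α, β, ?_, rfl⟩
      intro hzero
      have hFw0 : Fq F (-(Fq F 0 (![0,0,0,1] + α•u + β•u')))
          ((![0,0,0,1] : Fin 4 → F) + α•u + β•u') = 0 := by
        rw [Fq_lam_split, hwcoord3 α β]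
        ring
      have hB0 : polarFq F (-(Fq F 0 (![0,0,0,1] + α•u + β•u'))) p
          ((![0,0,0,1] : Fin 4 → F) + α•u + β•u') = 0 := by
        rw [hφw]
        exact hzero
      exact not_secant_full (hli_w α β) (hFp_all _) hFw0 hB0 (hsec _)
    · rintro ⟨α, β, hcond, rfl⟩
      refine ⟨⟨finrank_span_pair (hli_w α β), ?_, ?_⟩, ?_⟩
      · rw [hinf α β]
        exact hPconic
      · intro lam
        have hB : polarFq F lam p ((![0,0,0,1] : Fin 4 → F) + α•u + β•u') ≠ 0 := by
          rw [hφw]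
          exact hcond
        exact secant_of (hli_w α β) (hFp_all lam) hB
      · rw [span_singleton_le_iff_mem]
        exact mem_span_pair' 1 0 (by module)
  have hans4' : ({l | l ∈ lineL4' F ∧ span F {p} ≤ l}).ncard = q * (q - 1) := by
    rw [hset4']
    have hinj : Set.InjOn (fun ab : F × F => span F {p, ![0,0,0,1] + ab.1•u + ab.2•u'})
        {ab : F × F | ab.1 * polarFq F 0 p u + ab.2 * polarFq F 0 p u' ≠ 0} := by
      rintro ⟨a, b⟩ - ⟨a', b'⟩ - h
      have := inj_ab hLI h
      simp only [Prod.mk.injEq]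
      exact this
    rw [Set.ncard_image_of_injOn hinj]
    exact ncard_good_pairs q hq _ _ hphiu'
  -- (5) no external line of pi through P
  have hans2 : {l | l ∈ lineL2 F ∧ span F {p} ≤ l} = ∅ := by
    rw [Set.eq_empty_iff_forall_notMem]
    rintro l ⟨⟨hl, hlpi, hcnt⟩, hPl⟩
    rw [Set.ncard_eq_zero (Set.toFinite _)] at hcnt
    have hmem : span F {p} ∈ {P | P ∈ conicC F ∧ P ≤ l} := ⟨hPconic, hPl⟩
    rw [hcnt] at hmem
    exact hmem
  -- (6) no line of L4 through P
  have hans4 : {l | l ∈ lineL4 F ∧ span F {p} ≤ l} = ∅ := by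
    rw [Set.eq_empty_iff_forall_notMem]
    rintro l ⟨⟨hl, -, -, hE⟩, hPl⟩
    obtain ⟨hpt, -, hnC, -⟩ := hE
    have hle : span F {p} ≤ l ⊓ planePi F :=
      le_inf hPl ((span_singleton_le_iff_mem _ _).2 hppi)
    have heq : span F {p} = l ⊓ planePi F := by
      apply Submodule.eq_of_le_of_finrank_le hle
      rw [finrank_span_singleton hp0]
      exact le_of_eq hpt
    exact hnC (heq ▸ hPconic)
  -- (7) no line of L2' through P
  have hans2' : {l | l ∈ lineL2' F ∧ span F {p} ≤ l} = ∅ := by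
    rw [Set.eq_empty_iff_forall_notMem]
    rintro l ⟨⟨hl, -, hI⟩, hPl⟩
    obtain ⟨hpt, -, hnC, -⟩ := hI
    have hle : span F {p} ≤ l ⊓ planePi F :=
      le_inf hPl ((span_singleton_le_iff_mem _ _).2 hppi)
    have heq : span F {p} = l ⊓ planePi F := by
      apply Submodule.eq_of_le_of_finrank_le hle
      rw [finrank_span_singleton hp0]
      exact le_of_eq hpt
    exact hnC (heq ▸ hPconic)
  -- (8) no line of L3' through P
  have hans3' : {l | l ∈ lineL3' F ∧ span F {p} ≤ l} = ∅ := by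
    rw [Set.eq_empty_iff_forall_notMem]
    rintro l ⟨⟨hl, -, hE⟩, hPl⟩
    obtain ⟨hpt, -, hnC, -⟩ := hE
    have hle : span F {p} ≤ l ⊓ planePi F :=
      le_inf hPl ((span_singleton_le_iff_mem _ _).2 hppi)
    have heq : span F {p} = l ⊓ planePi F := by
      apply Submodule.eq_of_le_of_finrank_le hle
      rw [finrank_span_singleton hp0]
      exact le_of_eq hpt
    exact hnC (heq ▸ hPconic)
  exact ⟨hans1, hans3, hans1', hans4', hans2, hans4, hans2', hans3'⟩



omit [Field F] in
lemma cons4_0 {α : Type*} (a b c d : α) : (![a,b,c,d] : Fin 4 → α) 0 = a := rfl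
omit [Field F] in
lemma cons4_1 {α : Type*} (a b c d : α) : (![a,b,c,d] : Fin 4 → α) 1 = b := rfl
omit [Field F] in
lemma cons4_2 {α : Type*} (a b c d : α) : (![a,b,c,d] : Fin 4 → α) 2 = c := rfl
omit [Field F] in
lemma cons4_3 {α : Type*} (a b c d : α) : (![a,b,c,d] : Fin 4 → α) 3 = d := rfl

lemma instA (t : F) :
    LinearIndependent F ![![1,t,t^2,0], ![0,1,0,0], ![0,0,1,0], (![0,0,0,1] : Fin 4 → F)] := by
  rw [Fintype.linearIndependent_iff]
  intro g hg
  have h0 := congrFun hg 0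
  have h1 := congrFun hg 1
  have h2 := congrFun hg 2
  have h3 := congrFun hg 3
  simp only [Fin.sum_univ_four, Finset.sum_apply, Pi.add_apply, Pi.smul_apply, smul_eq_mul,
    Pi.zero_apply, cons4_0, cons4_1, cons4_2, cons4_3, mul_one, mul_zero, add_zero,
    zero_add] at h0 h1 h2 h3
  intro i
  fin_cases i <;> simp_all

lemma instB :
    LinearIndependent F ![![0,0,1,0], ![0,1,0,0], ![1,0,0,0], (![0,0,0,1] : Fin 4 → F)] := by
  rw [Fintype.linearIndependent_iff]
  intro g hg
  have h0 := congrFun hg 0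
  have h1 := congrFun hg 1
  have h2 := congrFun hg 2
  have h3 := congrFun hg 3
  simp only [Fin.sum_univ_four, Finset.sum_apply, Pi.add_apply, Pi.smul_apply, smul_eq_mul,
    Pi.zero_apply, cons4_0, cons4_1, cons4_2, cons4_3, mul_one, mul_zero, add_zero,
    zero_add] at h0 h1 h2 h3
  intro i
  fin_cases i <;> simp_all

lemma hNLA (t : F) : ∀ b c : F, ¬(b = 0 ∧ c = 0) →
    polarFq F 0 ![1,t,t^2,0] (b•![0,1,0,0] + c•![0,0,1,0]) = 0 →
    Fq F 0 (b•![0,1,0,0] + c•![0,0,1,0]) ≠ 0 := by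
  intro b c hbc hpol
  have hw : b•(![0,1,0,0] : Fin 4 → F) + c•![0,0,1,0] = ![0,b,c,0] := by
    funext i
    fin_cases i <;> simp [Pi.smul_apply, cons4_0, cons4_1, cons4_2, cons4_3]
  rw [hw] at hpol ⊢
  rw [polarFq_eq] at hpol
  simp only [cons4_0, cons4_1, cons4_2, cons4_3] at hpol
  have hb : b ≠ 0 := by
    intro hb
    apply hbc
    refine ⟨hb, ?_⟩
    rw [hb] at hpol
    linear_combination hpol
  simp only [Fq, cons4_0, cons4_1, cons4_2, cons4_3]
  intro hF
  apply hb
  have hb2 : b^2 = 0 := by linear_combination -hF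
  exact pow_eq_zero_iff (by norm_num) |>.1 hb2

lemma hNLB : ∀ b c : F, ¬(b = 0 ∧ c = 0) →
    polarFq F 0 ![0,0,1,0] (b•![0,1,0,0] + c•![1,0,0,0]) = 0 →
    Fq F 0 (b•![0,1,0,0] + c•![1,0,0,0]) ≠ 0 := by
  intro b c hbc hpol
  have hw : b•(![0,1,0,0] : Fin 4 → F) + c•![1,0,0,0] = ![c,b,0,0] := by
    funext i
    fin_cases i <;> simp [Pi.smul_apply, cons4_0, cons4_1, cons4_2, cons4_3]
  rw [hw] at hpol ⊢
  rw [polarFq_eq] at hpol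
  simp only [cons4_0, cons4_1, cons4_2, cons4_3] at hpol
  have hb : b ≠ 0 := by
    intro hb
    apply hbc
    refine ⟨hb, ?_⟩
    linear_combination hpol
  simp only [Fq, cons4_0, cons4_1, cons4_2, cons4_3]
  intro hF
  apply hb
  have hb2 : b^2 = 0 := by linear_combination -hF
  exact pow_eq_zero_iff (by norm_num) |>.1 hb2

theorem statement_10 {F : Type} [Field F] [Fintype F] (q : ℕ)
    (hq : Fintype.card F = q) (hodd : Odd q) :
    ∀ P ∈ conicC F,
      ({l | l ∈ lineL1 F ∧ P ≤ l}).ncard = 1 ∧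
      ({l | l ∈ lineL3 F ∧ P ≤ l}).ncard = q ∧
      ({l | l ∈ lineL1' F ∧ P ≤ l}).ncard = 1 ∧
      ({l | l ∈ lineL4' F ∧ P ≤ l}).ncard = q * (q - 1) ∧
      {l | l ∈ lineL2 F ∧ P ≤ l} = ∅ ∧
      {l | l ∈ lineL4 F ∧ P ≤ l} = ∅ ∧
      {l | l ∈ lineL2' F ∧ P ≤ l} = ∅ ∧
      {l | l ∈ lineL3' F ∧ P ≤ l} = ∅ := by
  intro P hP
  obtain ⟨⟨hPpt, hPvan⟩, hPpi⟩ := hP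
  have hPbot : P ≠ ⊥ := by
    intro h
    rw [h] at hPpt
    simp [isPoint] at hPpt
  obtain ⟨x, hxP, hx0⟩ := (Submodule.ne_bot_iff P).1 hPbot
  have hx3 : x 3 = 0 := hPpi hxP
  have hxC : Fq F 0 x = 0 := hPvan x hxP
  have hxC' : x 0 * x 2 - x 1^2 = 0 := by
    simp only [Fq] at hxC
    linear_combination hxC
  by_cases h0 : x 0 = 0
  · have hx1 : x 1 = 0 := by
      have h2 : x 1^2 = 0 := by linear_combination x 2 * h0 - hxC'
      exact pow_eq_zero_iff (by norm_num) |>.1 h2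
    have hx2 : x 2 ≠ 0 := by
      intro h2
      apply hx0
      funext i
      fin_cases i <;> simp [h0, hx1, h2, hx3]
    have hxv : x = x 2 • ![0,0,1,0] := by
      funext i
      fin_cases i <;>
        simp [Pi.smul_apply, cons4_0, cons4_1, cons4_2, cons4_3, h0, hx1, hx3]
    have hPeq : P = span F {(![0,0,1,0] : Fin 4 → F)} := by
      rw [point_eq_span hPpt hxP hx0, hxv,
        span_singleton_smul_eq (isUnit_iff_ne_zero.2 hx2)]
    rw [hPeq]
    exact main q hq (p := ![0,0,1,0]) (u := ![0,1,0,0]) (u' := ![1,0,0,0]) rfl rfl rfl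
      (by simp only [Fq, cons4_0, cons4_1, cons4_2, cons4_3]; ring)
      instB
      (by rw [polarFq_eq]; simp only [cons4_0, cons4_1, cons4_2, cons4_3]; norm_num)
      hNLB
  · set t := x 1 / x 0 with ht
    have e1 : x 1 = x 0 * t := by
      rw [ht]
      field_simp
    have e2 : x 2 = x 0 * t^2 := by
      rw [ht]
      field_simp
      linear_combination hxC'
    have hxv : x = x 0 • ![1, t, t^2, 0] := by
      funext i
      fin_cases i <;> simp [e1, e2, hx3]
    have hPeq : P = span F {(![1, t, t^2, 0] : Fin 4 → F)} := by
      rw [point_eq_span hPpt hxP hx0, hxv,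
        span_singleton_smul_eq (isUnit_iff_ne_zero.2 h0)]
    rw [hPeq]
    exact main q hq (p := ![1,t,t^2,0]) (u := ![0,1,0,0]) (u' := ![0,0,1,0]) rfl rfl rfl
      (by simp only [Fq, cons4_0, cons4_1, cons4_2, cons4_3]; ring)
      (instA t)
      (by rw [polarFq_eq]; simp only [cons4_0, cons4_1, cons4_2, cons4_3]; norm_num)
      (hNLA t)
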